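/- Let d ≥ 1 and set A = 2^{d/2}. There is a constant C (depending only on A, hence on d) such that for every sequence (a_k)_{k≥0} of nonnegative real numbers one has Σ_{k≥0} A^k·a_k ≤ C·(Σ_{k≥0} a_k²)^{1/4}·(Σ_{k≥0} A^{4k}·a_k²)^{1/4} (where the inequality is trivially true if either sum on the right diverges). -/

import Mathlib

open scoped ENNReal
open MeasureTheory

lemma cs_tsum (f g : ℕ → ℝ≥0∞) :
    ∑' k, f k * g k ≤ (∑' k, f k ^ 2) ^ (1/2 : ℝ) * (∑' k, g k ^ 2) ^ (1/2 : ℝ) := by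
  have hpq : (2 : ℝ).HolderConjugate 2 := by constructor <;> norm_num
  have h := ENNReal.lintegral_mul_le_Lp_mul_Lq (Measure.count : Measure ℕ) hpq
    (f := f) (g := g) (measurable_of_countable f).aemeasurable
    (measurable_of_countable g).aemeasurable
  simp only [Pi.mul_apply, lintegral_count] at h
  have h2 : ∀ x : ℝ≥0∞, x ^ (2:ℝ) = x ^ 2 := fun x => by
    rw [← ENNReal.rpow_natCast]; norm_num
  simpa [h2] using h

lemma sq_rpow_half (x : ℝ≥0∞) : (x ^ 2) ^ (1/2 : ℝ) = x := by
  rw [← ENNReal.rpow_natCast x 2, ← ENNReal.rpow_mul]; norm_num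

lemma rpow_half_half (x : ℝ≥0∞) : (x ^ (1/2 : ℝ)) ^ (1/2 : ℝ) = x ^ (1/4 : ℝ) := by
  rw [← ENNReal.rpow_mul]; norm_num

set_option maxHeartbeats 1000000 in
/-- the appendix inequality, (5.1) of the paper. With `A = 2^{d/2}`,
for every sequence `(a_k)_{k ≥ 0}` of nonnegative reals,
`Σ_k A^k a_k ≤ C (Σ_k a_k²)^{1/4} (Σ_k A^{4k} a_k²)^{1/4}`. The sums are interpreted in
`ℝ≥0∞`, so the inequality is trivially true if either sum on the right diverges. -/
theorem statement13 (d : ℕ) (hd : 1 ≤ d) :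
    ∃ C : ℝ, 0 < C ∧ ∀ a : ℕ → ℝ, (∀ k, 0 ≤ a k) →
      (∑' k : ℕ, ENNReal.ofReal (((2 : ℝ) ^ ((d : ℝ) / 2)) ^ k * a k)) ≤
        ENNReal.ofReal C *
          (∑' k : ℕ, ENNReal.ofReal (a k ^ 2)) ^ (1 / 4 : ℝ) *
          (∑' k : ℕ, ENNReal.ofReal (((2 : ℝ) ^ ((d : ℝ) / 2)) ^ (4 * k) * a k ^ 2)) ^
            (1 / 4 : ℝ) := by
  set A : ℝ := (2 : ℝ) ^ ((d : ℝ) / 2) with hAdef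
  have hA1 : 1 < A := by
    have : (0:ℝ) < (d : ℝ) / 2 := by
      have : (1:ℝ) ≤ (d:ℝ) := by exact_mod_cast hd
      linarith
    calc (1:ℝ) = 2 ^ (0:ℝ) := by norm_num
      _ < 2 ^ ((d:ℝ)/2) := by
          apply Real.rpow_lt_rpow_left_iff (by norm_num : (1:ℝ) < 2) |>.mpr this
  have hA0 : 0 < A := lt_trans one_pos hA1
  have hA2 : 0 < A^2 - 1 := by nlinarith
  set t1 : ℝ := (A^2/(A^2-1)) ^ (1/2 : ℝ) with ht1
  set t2 : ℝ := A^2 * ((1/(A^2-1)) ^ (1/2 : ℝ)) with ht2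
  have ht1nn : 0 ≤ t1 := Real.rpow_nonneg (by positivity) _
  have ht2nn : 0 ≤ t2 := mul_nonneg (by positivity) (Real.rpow_nonneg (by positivity) _)
  refine ⟨t1 + t2 + 1, by linarith, fun a ha => ?_⟩
  set B : ℝ≥0∞ := ENNReal.ofReal A with hBdef
  set S : ℝ≥0∞ := ∑' k : ℕ, ENNReal.ofReal (a k ^ 2) with hSdef
  set T : ℝ≥0∞ := ∑' k : ℕ, ENNReal.ofReal (A ^ (4 * k) * a k ^ 2) with hTdef
  -- trivial case: S = 0
  by_cases hS : S = 0
  · have haz : ∀ k, a k = 0 := by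
      intro k
      have h0 : ENNReal.ofReal (a k ^ 2) = 0 := ENNReal.tsum_eq_zero.mp hS k
      have := (ENNReal.ofReal_eq_zero).mp h0
      nlinarith [ha k, sq_nonneg (a k)]
    have : ∀ k : ℕ, ENNReal.ofReal (A ^ k * a k) = 0 := by
      intro k; rw [haz k]; simp
    rw [tsum_congr this]; simp
  -- trivial case: T = ∞
  have hST : S ≤ T := by
    refine ENNReal.tsum_le_tsum fun k => ENNReal.ofReal_le_ofReal ?_
    have h1 : (1:ℝ) ≤ A ^ (4*k) := one_le_pow₀ hA1.le
    nlinarith [sq_nonneg (a k)]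
  by_cases hT : T = ⊤
  · rw [hT]
    rw [ENNReal.top_rpow_of_pos (by norm_num)]
    rw [ENNReal.mul_top]
    · exact le_top
    · refine mul_ne_zero ?_ ?_
      · simp [ENNReal.ofReal_eq_zero]; linarith
      · simp [ENNReal.rpow_eq_zero_iff, hS]
  -- main case
  have hSfin : S ≠ ⊤ := fun h => hT (top_le_iff.mp (h ▸ hST))
  have hT0 : T ≠ 0 := fun h => hS (le_antisymm (h ▸ hST) zero_le)
  have hTSne : T / S ≠ ⊤ := by
    intro h
    rcases ENNReal.div_eq_top.mp h with ⟨_, h2⟩ | ⟨h1, _⟩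
    · exact hS h2
    · exact hT h1
  set x : ℝ := (T / S).toReal with hxdef
  have hx1 : (1:ℝ) ≤ x := by
    have h1 : (1:ℝ≥0∞) ≤ T / S := by
      rw [ENNReal.le_div_iff_mul_le (Or.inl hS) (Or.inl hSfin), one_mul]; exact hST
    have := (ENNReal.toReal_le_toReal (by simp) hTSne).mpr h1
    simpa only [ENNReal.toReal_one] using this
  -- find threshold K
  have hA4 : (1:ℝ) < A^4 := one_lt_pow₀ hA1 (by norm_num)
  have hex : ∃ n : ℕ, x < (A^4) ^ n := pow_unbounded_of_one_lt x hA4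
  set N := Nat.find hex with hNdef
  have hNspec : x < (A^4) ^ N := Nat.find_spec hex
  have hN0 : N ≠ 0 := by
    intro h; rw [h] at hNspec; simp at hNspec; linarith
  set K := N - 1 with hKdef
  have hKN : K + 1 = N := Nat.succ_pred_eq_of_ne_zero hN0
  have hup : x < (A^4) ^ (K+1) := hKN ▸ hNspec
  have hlow : (A^4) ^ K ≤ x := by
    by_contra h
    exact Nat.find_min hex (by omega : K < N) (not_le.mp h)
  -- ENNReal threshold inequalities
  have hofx : ENNReal.ofReal x = T / S := ENNReal.ofReal_toReal hTSne
  have hBpow : ∀ m : ℕ, ENNReal.ofReal (A ^ m) = B ^ m := fun m =>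
    ENNReal.ofReal_pow hA0.le m
  have hBK_low : B ^ (4*K) * S ≤ T := by
    have h1 : ENNReal.ofReal ((A^4)^K) ≤ T / S := by
      rw [← hofx]; exact ENNReal.ofReal_le_ofReal hlow
    have h2 : ENNReal.ofReal ((A^4)^K) = B ^ (4*K) := by
      rw [← pow_mul, hBpow]
    calc B ^ (4*K) * S ≤ (T / S) * S := by
          rw [← h2]; exact mul_le_mul_left h1 S
      _ = T := ENNReal.div_mul_cancel hS hSfin
  have hBK_up : T ≤ B ^ (4*(K+1)) * S := by
    have h1 : T / S ≤ ENNReal.ofReal ((A^4)^(K+1)) := by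
      rw [← hofx]; exact ENNReal.ofReal_le_ofReal hup.le
    have h2 : ENNReal.ofReal ((A^4)^(K+1)) = B ^ (4*(K+1)) := by
      rw [← pow_mul, hBpow]
    calc T = (T / S) * S := (ENNReal.div_mul_cancel hS hSfin).symm
      _ ≤ B ^ (4*(K+1)) * S := by rw [← h2]; exact mul_le_mul_left h1 S
  -- the splitting
  set g1 : ℕ → ℝ≥0∞ := fun k => ENNReal.ofReal (a k) with hg1def
  set f1 : ℕ → ℝ≥0∞ := fun k => if k ≤ K then B ^ k else 0 with hf1def
  set f2 : ℕ → ℝ≥0∞ := fun k => if K < k then ENNReal.ofReal (A⁻¹ ^ k) else 0 with hf2def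
  set g2 : ℕ → ℝ≥0∞ := fun k => B ^ (2*k) * ENNReal.ofReal (a k) with hg2def
  have hterm : ∀ k : ℕ, ENNReal.ofReal (A ^ k * a k) = B ^ k * g1 k := fun k => by
    rw [ENNReal.ofReal_mul (by positivity), hBpow]
  have hdecomp : ∀ k : ℕ, B ^ k * g1 k = f1 k * g1 k + f2 k * g2 k := by
    intro k
    by_cases hk : k ≤ K
    · simp [hf1def, hf2def, hk, not_lt.mpr hk]
    · simp only [hf1def, hf2def, if_neg hk, if_pos (not_le.mp hk), zero_mul, zero_add,
        hg2def, hg1def]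
      have hinv : (0:ℝ) ≤ A⁻¹ ^ k := by positivity
      have e1 : A⁻¹ ^ k * A ^ (2*k) = A ^ k := by
        rw [two_mul, pow_add, inv_pow, inv_mul_cancel_left₀ (pow_ne_zero k hA0.ne')]
      have : ENNReal.ofReal (A⁻¹ ^ k) * (B ^ (2*k) * ENNReal.ofReal (a k))
          = B ^ k * ENNReal.ofReal (a k) := by
        rw [← mul_assoc, ← hBpow (2*k), ← ENNReal.ofReal_mul hinv, e1, hBpow]
      exact this.symm
  calc (∑' k : ℕ, ENNReal.ofReal (A ^ k * a k))
      = ∑' k : ℕ, (f1 k * g1 k + f2 k * g2 k) := by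
        rw [tsum_congr hterm]; exact tsum_congr hdecomp
    _ = (∑' k, f1 k * g1 k) + ∑' k, f2 k * g2 k := ENNReal.tsum_add
    _ ≤ (∑' k, f1 k ^ 2) ^ (1/2:ℝ) * (∑' k, g1 k ^ 2) ^ (1/2:ℝ)
        + (∑' k, f2 k ^ 2) ^ (1/2:ℝ) * (∑' k, g2 k ^ 2) ^ (1/2:ℝ) :=
        add_le_add (cs_tsum f1 g1) (cs_tsum f2 g2)
    _ ≤ ENNReal.ofReal (t1 + t2) * (S ^ (1/4:ℝ) * T ^ (1/4:ℝ)) := by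
        set c1 : ℝ≥0∞ := ENNReal.ofReal (A^2/(A^2-1)) with hc1def
        set c2 : ℝ≥0∞ := ENNReal.ofReal (1/(A^2-1)) with hc2def
        set DK : ℝ≥0∞ := ENNReal.ofReal (A⁻¹ ^ (2*K)) with hDKdef
        have hg1sq : (∑' k, g1 k ^ 2) = S :=
          tsum_congr fun k => (ENNReal.ofReal_pow (ha k) 2).symm
        have hg2sq : (∑' k, g2 k ^ 2) = T := by
          refine tsum_congr fun k => ?_
          show (B ^ (2*k) * ENNReal.ofReal (a k)) ^ 2 = ENNReal.ofReal (A ^ (4*k) * a k ^ 2)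
          rw [ENNReal.ofReal_mul (by positivity), hBpow, ENNReal.ofReal_pow (ha k), mul_pow,
            ← pow_mul]
          ring_nf
        have hf1sq : (∑' k, f1 k ^ 2) ≤ B ^ (2*K) * c1 := by
          have hptw : ∀ k, f1 k ^ 2 = if k ≤ K then ENNReal.ofReal ((A^2) ^ k) else 0 := by
            intro k
            by_cases hk : k ≤ K
            · simp only [hf1def, if_pos hk]
              rw [← pow_mul, ← hBpow, pow_mul']
            · simp [hf1def, if_neg hk]
          have hsum : (∑' k, f1 k ^ 2)
              = ∑ k ∈ Finset.range (K+1), ENNReal.ofReal ((A^2) ^ k) := by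
            rw [tsum_congr hptw]
            rw [tsum_eq_sum (s := Finset.range (K+1))
              (fun b hb => if_neg (by simpa using hb))]
            exact Finset.sum_congr rfl fun k hk =>
              if_pos (by simpa [Nat.lt_succ_iff] using hk)
          rw [hsum, ← ENNReal.ofReal_sum_of_nonneg (fun i _ => by positivity)]
          have hreal : (∑ k ∈ Finset.range (K+1), (A^2) ^ k)
              ≤ A ^ (2*K) * (A^2/(A^2-1)) := by
            have hA2ne : (A^2) ≠ 1 := by nlinarith
            rw [geom_sum_eq hA2ne, div_le_iff₀ hA2]
            have e2 : A ^ (2*K) * (A^2/(A^2-1)) * (A^2-1) = A^(2*K) * A^2 := by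
              field_simp
            rw [e2]
            have e3 : (A^2) ^ (K+1) = A^(2*K) * A^2 := by rw [pow_succ, pow_mul]
            rw [e3]; linarith
          calc ENNReal.ofReal (∑ k ∈ Finset.range (K+1), (A^2) ^ k)
              ≤ ENNReal.ofReal (A ^ (2*K) * (A^2/(A^2-1))) := ENNReal.ofReal_le_ofReal hreal
            _ = B ^ (2*K) * c1 := by
                rw [ENNReal.ofReal_mul (by positivity), hBpow]
        have hf2sq : (∑' k, f2 k ^ 2) ≤ DK * c2 := by
          set r : ℝ := A⁻¹ ^ 2 with hrdef
          have hr0 : 0 ≤ r := by positivity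
          have hr1 : r < 1 := by
            rw [hrdef, inv_pow]
            rw [inv_lt_one_iff₀]
            right; nlinarith
          have hptw : ∀ k, f2 k ^ 2 = if K < k then ENNReal.ofReal (r ^ k) else 0 := by
            intro k
            by_cases hk : K < k
            · simp only [hf2def, if_pos hk]
              rw [← ENNReal.ofReal_pow (show (0:ℝ) ≤ A⁻¹ ^ k by positivity) 2]
              congr 1
              rw [hrdef, ← pow_mul, ← pow_mul, mul_comm]
            · simp [hf2def, if_neg hk]
          rw [tsum_congr hptw]
          rw [← Summable.sum_add_tsum_nat_add' (f := fun k => if K < k then ENNReal.ofReal (r ^ k) else 0)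
            (k := K+1) ENNReal.summable]
          have hz : (∑ i ∈ Finset.range (K+1), if K < i then ENNReal.ofReal (r ^ i) else 0)
              = 0 := by
            refine Finset.sum_eq_zero fun i hi => if_neg ?_
            simp only [Finset.mem_range, Nat.lt_succ_iff] at hi
            omega
          rw [hz, zero_add]
          have htail : ∀ i : ℕ, (if K < i + (K+1) then ENNReal.ofReal (r ^ (i + (K+1))) else 0)
              = ENNReal.ofReal (r ^ (i + (K+1))) := fun i => if_pos (by omega)
          rw [tsum_congr htail]
          have hsummable : Summable fun i : ℕ => r ^ (i + (K+1)) := by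
            simp_rw [pow_add]
            exact (summable_geometric_of_lt_one hr0 hr1).mul_right _
          rw [← ENNReal.ofReal_tsum_of_nonneg (fun i => by positivity) hsummable]
          have hts : (∑' i : ℕ, r ^ (i + (K+1))) = r ^ (K+1) * (1-r)⁻¹ := by
            simp_rw [pow_add]
            rw [tsum_mul_right, tsum_geometric_of_lt_one hr0 hr1, mul_comm]
          rw [hts]
          have hre : r ^ (K+1) * (1-r)⁻¹ = A⁻¹ ^ (2*K) * (1/(A^2-1)) := by
            have hAne : A ≠ 0 := hA0.ne'
            have h1r : 1 - r = (A^2-1)/A^2 := by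
              rw [hrdef, inv_pow]; field_simp
            rw [show A⁻¹ ^ (2*K) = r ^ K from by rw [hrdef, pow_mul], h1r, pow_succ,
              mul_assoc]
            congr 1
            rw [hrdef, inv_pow]
            field_simp
          rw [hre, ENNReal.ofReal_mul (show (0:ℝ) ≤ A⁻¹ ^ (2*K) by positivity)]
        have b1 : (∑' k, f1 k ^ 2) ^ (1/2:ℝ) ≤ (B ^ (2*K) * c1) ^ (1/2:ℝ) :=
          ENNReal.rpow_le_rpow hf1sq (by norm_num)
        have b2 : (∑' k, f2 k ^ 2) ^ (1/2:ℝ) ≤ (DK * c2) ^ (1/2:ℝ) :=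
          ENNReal.rpow_le_rpow hf2sq (by norm_num)
        have hkey : B ^ (2*K) * S ≤ T ^ (1/2:ℝ) * S ^ (1/2:ℝ) := by
          have h1 : (B ^ (4*K) * S) * S ≤ T * S := mul_le_mul_left hBK_low S
          have h2 := ENNReal.rpow_le_rpow h1 (by norm_num : (0:ℝ) ≤ 1/2)
          have e1 : (B ^ (4*K) * S) * S = (B ^ (2*K) * S) ^ 2 := by ring
          rw [e1, sq_rpow_half, ENNReal.mul_rpow_of_nonneg _ _ (by norm_num)] at h2
          exact h2
        have hkey2 : DK * T ≤ B ^ 4 * (T ^ (1/2:ℝ) * S ^ (1/2:ℝ)) := by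
          have h1 : DK * T ≤ DK * (B ^ (4*(K+1)) * S) := mul_le_mul_right hBK_up _
          have e0 : A⁻¹ ^ (2*K) * A ^ (4*(K+1)) = A ^ (2*K+4) := by
            have h4 : 4*(K+1) = 2*K + (2*K+4) := by omega
            rw [h4, pow_add, inv_pow, inv_mul_cancel_left₀ (pow_ne_zero _ hA0.ne')]
          have e1 : DK * B ^ (4*(K+1)) = B ^ (2*K+4) := by
            rw [hDKdef, ← hBpow (4*(K+1)),
              ← ENNReal.ofReal_mul (show (0:ℝ) ≤ A⁻¹ ^ (2*K) by positivity), e0, hBpow]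
          have e2 : DK * (B ^ (4*(K+1)) * S) = B ^ 4 * (B ^ (2*K) * S) := by
            rw [← mul_assoc, e1, pow_add]; ring
          rw [e2] at h1
          exact le_trans h1 (mul_le_mul_right hkey _)
        have hc1half : ENNReal.ofReal t1 = c1 ^ (1/2:ℝ) := by
          rw [ht1, hc1def]
          exact (ENNReal.ofReal_rpow_of_nonneg (x := A^2/(A^2-1)) (p := 1/2)
            (by positivity) (by norm_num)).symm
        have hc2half : ENNReal.ofReal ((1/(A^2-1)) ^ (1/2:ℝ)) = c2 ^ (1/2:ℝ) := by
          rw [hc2def]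
          exact (ENNReal.ofReal_rpow_of_nonneg (x := 1/(A^2-1)) (p := 1/2)
            (by positivity) (by norm_num)).symm
        have pow4half : (B ^ 4 : ℝ≥0∞) ^ (1/2:ℝ) = B ^ 2 := by
          rw [← ENNReal.rpow_natCast B 4, ← ENNReal.rpow_mul, ← ENNReal.rpow_natCast B 2]
          norm_num
        have p1 : (∑' k, f1 k ^ 2) ^ (1/2:ℝ) * (∑' k, g1 k ^ 2) ^ (1/2:ℝ)
            ≤ ENNReal.ofReal t1 * (S ^ (1/4:ℝ) * T ^ (1/4:ℝ)) := by
          rw [hg1sq]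
          calc (∑' k, f1 k ^ 2) ^ (1/2:ℝ) * S ^ (1/2:ℝ)
              ≤ (B ^ (2*K) * c1) ^ (1/2:ℝ) * S ^ (1/2:ℝ) := mul_le_mul_left b1 _
            _ = c1 ^ (1/2:ℝ) * (B ^ (2*K) * S) ^ (1/2:ℝ) := by
                rw [ENNReal.mul_rpow_of_nonneg _ _ (by norm_num : (0:ℝ) ≤ 1/2),
                  ENNReal.mul_rpow_of_nonneg _ _ (by norm_num : (0:ℝ) ≤ 1/2)]
                ring
            _ ≤ c1 ^ (1/2:ℝ) * (T ^ (1/2:ℝ) * S ^ (1/2:ℝ)) ^ (1/2:ℝ) :=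
                mul_le_mul_right (ENNReal.rpow_le_rpow hkey (by norm_num)) _
            _ = ENNReal.ofReal t1 * (S ^ (1/4:ℝ) * T ^ (1/4:ℝ)) := by
                rw [ENNReal.mul_rpow_of_nonneg _ _ (by norm_num : (0:ℝ) ≤ 1/2),
                  rpow_half_half, rpow_half_half, hc1half]
                ring
        have p2 : (∑' k, f2 k ^ 2) ^ (1/2:ℝ) * (∑' k, g2 k ^ 2) ^ (1/2:ℝ)
            ≤ ENNReal.ofReal t2 * (S ^ (1/4:ℝ) * T ^ (1/4:ℝ)) := by
          rw [hg2sq]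
          calc (∑' k, f2 k ^ 2) ^ (1/2:ℝ) * T ^ (1/2:ℝ)
              ≤ (DK * c2) ^ (1/2:ℝ) * T ^ (1/2:ℝ) := mul_le_mul_left b2 _
            _ = c2 ^ (1/2:ℝ) * (DK * T) ^ (1/2:ℝ) := by
                rw [ENNReal.mul_rpow_of_nonneg _ _ (by norm_num : (0:ℝ) ≤ 1/2),
                  ENNReal.mul_rpow_of_nonneg _ _ (by norm_num : (0:ℝ) ≤ 1/2)]
                ring
            _ ≤ c2 ^ (1/2:ℝ) * (B ^ 4 * (T ^ (1/2:ℝ) * S ^ (1/2:ℝ))) ^ (1/2:ℝ) :=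
                mul_le_mul_right (ENNReal.rpow_le_rpow hkey2 (by norm_num)) _
            _ = ENNReal.ofReal t2 * (S ^ (1/4:ℝ) * T ^ (1/4:ℝ)) := by
                rw [ENNReal.mul_rpow_of_nonneg _ _ (by norm_num : (0:ℝ) ≤ 1/2),
                  ENNReal.mul_rpow_of_nonneg _ _ (by norm_num : (0:ℝ) ≤ 1/2),
                  pow4half, rpow_half_half, rpow_half_half]
                have e4 : ENNReal.ofReal t2 = B ^ 2 * c2 ^ (1/2:ℝ) := by
                  rw [ht2, ENNReal.ofReal_mul (by positivity), hBpow 2, hc2half]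
                rw [e4]; ring
        calc (∑' k, f1 k ^ 2) ^ (1/2:ℝ) * (∑' k, g1 k ^ 2) ^ (1/2:ℝ)
              + (∑' k, f2 k ^ 2) ^ (1/2:ℝ) * (∑' k, g2 k ^ 2) ^ (1/2:ℝ)
            ≤ ENNReal.ofReal t1 * (S ^ (1/4:ℝ) * T ^ (1/4:ℝ))
              + ENNReal.ofReal t2 * (S ^ (1/4:ℝ) * T ^ (1/4:ℝ)) := add_le_add p1 p2
          _ = ENNReal.ofReal (t1 + t2) * (S ^ (1/4:ℝ) * T ^ (1/4:ℝ)) := by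
              rw [ENNReal.ofReal_add ht1nn ht2nn, add_mul]
    _ ≤ ENNReal.ofReal (t1 + t2 + 1) *
          (∑' k : ℕ, ENNReal.ofReal (a k ^ 2)) ^ (1 / 4 : ℝ) *
          (∑' k : ℕ, ENNReal.ofReal (A ^ (4 * k) * a k ^ 2)) ^ (1 / 4 : ℝ) := by
        rw [mul_assoc]
        exact mul_le_mul_left (ENNReal.ofReal_le_ofReal (by linarith)) _
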